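/- Let J, R be n×n complex matrices with J skew-Hermitian and R Hermitian positive semi-definite. If there exists m ∈ ℕ such that rank of the block matrix [R, JR, J²R, …, J^m R] equals n, then the matrix T_m := Σ_{j=0}^{m} J^j R (J^H)^j is Hermitian positive definite. -/

import Mathlib

open Matrix
open scoped ComplexOrder

/-- If the Kalman-type rank condition `rank [R, JR, …, J^m R] = n` holds, then
`T_m = ∑_{j=0}^m J^j R (Jᴴ)^j` is Hermitian positive definite. -/
theorem stmt_2 (n : ℕ) (J R : Matrix (Fin n) (Fin n) ℂ)
    (hJ : Jᴴ = -J) (hR : R.PosSemidef) (m : ℕ)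
    (hrank : (Matrix.of fun (i : Fin n) (p : Fin (m + 1) × Fin n) =>
      (J ^ (p.1 : ℕ) * R) i p.2).rank = n) :
    (∑ j ∈ Finset.range (m + 1), J ^ j * R * (Jᴴ) ^ j).PosDef := by
  have hpow : ∀ j : ℕ, (Jᴴ) ^ j = (J ^ j)ᴴ := fun j => (conjTranspose_pow J j).symm
  set K : Matrix (Fin n) (Fin (m + 1) × Fin n) ℂ :=
    Matrix.of fun (i : Fin n) (p : Fin (m + 1) × Fin n) => (J ^ (p.1 : ℕ) * R) i p.2 with hK
  have hterm : ∀ j : ℕ, (J ^ j * R * (Jᴴ) ^ j).PosSemidef := by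
    intro j
    rw [hpow j]
    exact hR.mul_mul_conjTranspose_same (J ^ j)
  rw [posDef_iff_dotProduct_mulVec]
  constructor
  · show (∑ j ∈ Finset.range (m + 1), J ^ j * R * (Jᴴ) ^ j)ᴴ = _
    rw [Matrix.conjTranspose_sum]
    exact Finset.sum_congr rfl fun j _ => (hterm j).1
  · intro x hx
    -- the quadratic form splits as a sum of nonneg terms
    have hsplit : star x ⬝ᵥ (∑ j ∈ Finset.range (m + 1), J ^ j * R * (Jᴴ) ^ j) *ᵥ x
        = ∑ j ∈ Finset.range (m + 1), star x ⬝ᵥ (J ^ j * R * (Jᴴ) ^ j) *ᵥ x := by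
      have hs : (∑ j ∈ Finset.range (m + 1), J ^ j * R * (Jᴴ) ^ j) *ᵥ x
          = ∑ j ∈ Finset.range (m + 1), (J ^ j * R * (Jᴴ) ^ j) *ᵥ x := by
        funext i
        simp only [mulVec, dotProduct, Finset.sum_apply, Matrix.sum_apply, Finset.sum_mul]
        exact Finset.sum_comm
      rw [hs]
      simp only [dotProduct, Finset.sum_apply, Finset.mul_sum]
      exact Finset.sum_comm
    have hnonneg : ∀ j ∈ Finset.range (m + 1),
        (0 : ℂ) ≤ star x ⬝ᵥ (J ^ j * R * (Jᴴ) ^ j) *ᵥ x := fun j _ => (hterm j).dotProduct_mulVec_nonneg x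
    rw [hsplit]
    refine lt_of_le_of_ne (Finset.sum_nonneg hnonneg) (fun h0 => ?_)
    have hzero : ∀ j ∈ Finset.range (m + 1),
        star x ⬝ᵥ (J ^ j * R * (Jᴴ) ^ j) *ᵥ x = 0 :=
      (Finset.sum_eq_zero_iff_of_nonneg hnonneg).mp h0.symm
    -- deduce R *ᵥ ((J^j)ᴴ *ᵥ x) = 0 for each j
    have hRy : ∀ j ∈ Finset.range (m + 1), R *ᵥ ((J ^ j)ᴴ *ᵥ x) = 0 := by
      intro j hj
      have h2 := hzero j hj
      rw [hpow j, ← mulVec_mulVec, ← mulVec_mulVec, dotProduct_mulVec] at h2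
      have h3 : star ((J ^ j)ᴴ *ᵥ x) ⬝ᵥ R *ᵥ ((J ^ j)ᴴ *ᵥ x) = 0 := by
        rwa [star_mulVec, conjTranspose_conjTranspose]
      exact (hR.dotProduct_mulVec_zero_iff _).mp h3
    -- hence Kᴴ *ᵥ x = 0
    have hKx : Kᴴ *ᵥ x = 0 := by
      funext p
      have h1 : ((J ^ (p.1 : ℕ) * R)ᴴ *ᵥ x) p.2 = 0 := by
        have := hRy (p.1 : ℕ) (Finset.mem_range.mpr p.1.isLt)
        rw [conjTranspose_mul, hR.1.eq, ← mulVec_mulVec, this]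
        rfl
      simpa [mulVec, dotProduct, conjTranspose_apply, hK] using h1
    -- full rank implies injectivity of Kᴴ, contradiction with x ≠ 0
    have hrankH : Kᴴ.rank = n := by rw [Matrix.rank_conjTranspose]; exact hrank
    have hker : LinearMap.ker Kᴴ.mulVecLin = ⊥ := by
      have hrn := LinearMap.finrank_range_add_finrank_ker Kᴴ.mulVecLin
      rw [Module.finrank_pi, Fintype.card_fin] at hrn
      have : Module.finrank ℂ (LinearMap.ker Kᴴ.mulVecLin) = 0 := by
        have : Kᴴ.rank = Module.finrank ℂ (LinearMap.range Kᴴ.mulVecLin) := rfl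
        omega
      exact Submodule.finrank_eq_zero.mp this
    have : x = 0 := by
      have hmem : x ∈ LinearMap.ker Kᴴ.mulVecLin := by
        rw [LinearMap.mem_ker, mulVecLin_apply]; exact hKx
      rw [hker] at hmem
      simpa using hmem
    exact hx this
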